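/- The polynomial sequence {J_n(z,y)}_{n≥0}, where J_n(z,y) = ∑_{k=0}^n JS(n,k;z) y^k, is strongly {z,y}-log-convex: for all 1 ≤ m ≤ n, the bivariate polynomial J_{m-1}(z,y)·J_{n+1}(z,y) − J_m(z,y)·J_n(z,y) has nonnegative coefficients. -/

import Mathlib

open Polynomial Finset

/-- The Jacobi-Stirling numbers of the second kind `JS(n,k;z)`, as polynomials in `z`. -/
noncomputable def JS : ℕ → ℕ → Polynomial ℤ
  | 0, 0 => 1
  | 0, _+1 => 0
  | _+1, 0 => 0
  | n+1, k+1 => JS n k + (C ((k : ℤ) + 1) * (C ((k : ℤ) + 1) + X)) * JS n (k+1)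

/-- `c k = k(k+z)`, the coefficient in the JS recurrence. -/
noncomputable def cc (k : ℕ) : Polynomial ℤ := C (k : ℤ) * (C (k : ℤ) + X)

lemma JS_zero_zero : JS 0 0 = 1 := rfl
lemma JS_zero_succ (k : ℕ) : JS 0 (k+1) = 0 := rfl
lemma JS_succ_zero (n : ℕ) : JS (n+1) 0 = 0 := rfl

lemma JS_succ_succ (n k : ℕ) :
    JS (n+1) (k+1) = JS n k + cc (k+1) * JS n (k+1) := by
  show JS n k + (C ((k : ℤ) + 1) * (C ((k : ℤ) + 1) + X)) * JS n (k+1) = _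
  unfold cc
  push_cast
  ring

/-- "has nonnegative coefficients" predicate on `ℤ[z]`. -/
def PP (p : Polynomial ℤ) : Prop := ∀ t, 0 ≤ p.coeff t

lemma PP_zero : PP 0 := fun t => by simp

lemma PP_add {p q : Polynomial ℤ} (hp : PP p) (hq : PP q) : PP (p + q) := by
  intro t
  rw [coeff_add]
  exact add_nonneg (hp t) (hq t)

lemma PP_mul {p q : Polynomial ℤ} (hp : PP p) (hq : PP q) : PP (p * q) := by
  intro t
  rw [coeff_mul]
  exact Finset.sum_nonneg fun x _ => mul_nonneg (hp x.1) (hq x.2)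

lemma PP_cc (k : ℕ) : PP (cc k) := by
  intro t
  unfold cc
  simp only [mul_add, coeff_add, coeff_C_mul, coeff_C, coeff_X, mul_ite, mul_one, mul_zero]
  split_ifs <;> positivity

lemma PP_cc_sub {k l : ℕ} (h : k ≤ l) : PP (cc l - cc k) := by
  intro t
  unfold cc
  simp only [mul_add, coeff_sub, coeff_add, coeff_C_mul, coeff_C, coeff_X, mul_ite, mul_one,
    mul_zero]
  have hkl : (k : ℤ) ≤ (l : ℤ) := by exact_mod_cast h
  have hk : (0:ℤ) ≤ (k:ℤ) := by positivity
  split_ifs <;> nlinarith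

lemma JS_nonneg : ∀ n k, PP (JS n k) := by
  intro n
  induction n with
  | zero =>
    intro k
    cases k with
    | zero => rw [JS_zero_zero]; intro t; simp [coeff_one]; positivity
    | succ k => rw [JS_zero_succ]; exact PP_zero
  | succ n ih =>
    intro k
    cases k with
    | zero => rw [JS_succ_zero]; exact PP_zero
    | succ k =>
      rw [JS_succ_succ]
      exact PP_add (ih k) (PP_mul (PP_cc (k+1)) (ih (k+1)))

lemma JS_eq_zero : ∀ n k, n < k → JS n k = 0 := by
  intro n
  induction n with
  | zero =>
    intro k hk
    obtain ⟨k, rfl⟩ : ∃ k', k = k' + 1 := ⟨k - 1, by omega⟩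
    exact JS_zero_succ k
  | succ n ih =>
    intro k hk
    obtain ⟨k, rfl⟩ : ∃ k', k = k' + 1 := ⟨k - 1, by omega⟩
    rw [JS_succ_succ, ih k (by omega), ih (k+1) (by omega)]
    simp

/-- The key TP2 lemma: 2x2 minors of rows `a` and `a+d` of the JS triangle have
nonnegative coefficients. -/
lemma JS_TP2 (d : ℕ) : ∀ a i j, i ≤ j →
    PP (JS a i * JS (a+d) j - JS a j * JS (a+d) i) := by
  intro a
  induction a with
  | zero =>
    intro i j hij
    cases i with
    | zero =>
      cases j with
      | zero => simpa using PP_zero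
      | succ q =>
        rw [JS_zero_zero, JS_zero_succ]
        simp only [one_mul, zero_mul, sub_zero]
        exact JS_nonneg _ _
    | succ p =>
      obtain ⟨q, rfl⟩ : ∃ q', j = q' + 1 := ⟨j - 1, by omega⟩
      rw [JS_zero_succ, JS_zero_succ]
      simpa using PP_zero
  | succ a ih =>
    intro i j hij
    have hd : a + 1 + d = (a + d) + 1 := by omega
    rw [hd]
    cases i with
    | zero =>
      rw [JS_succ_zero, JS_succ_zero]
      simpa using PP_zero
    | succ p =>
      obtain ⟨q, rfl⟩ : ∃ q', j = q' + 1 := ⟨j - 1, by omega⟩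
      rcases eq_or_lt_of_le hij with heq | hlt
      · rw [heq]
        simpa using PP_zero
      · have hpq : p + 1 ≤ q := by omega
        have key : JS (a+1) (p+1) * JS ((a+d)+1) (q+1) - JS (a+1) (q+1) * JS ((a+d)+1) (p+1)
            = (JS a p * JS (a+d) q - JS a q * JS (a+d) p)
            + cc (q+1) * (JS a p * JS (a+d) (q+1) - JS a (q+1) * JS (a+d) p)
            + cc (p+1) * (JS a (p+1) * JS (a+d) q - JS a q * JS (a+d) (p+1))
            + cc (p+1) * cc (q+1) *
                (JS a (p+1) * JS (a+d) (q+1) - JS a (q+1) * JS (a+d) (p+1)) := by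
          rw [JS_succ_succ, JS_succ_succ, JS_succ_succ, JS_succ_succ]
          ring
        rw [key]
        exact PP_add (PP_add (PP_add (ih p q (by omega))
          (PP_mul (PP_cc (q+1)) (ih p (q+1) (by omega))))
          (PP_mul (PP_cc (p+1)) (ih (p+1) q hpq)))
          (PP_mul (PP_mul (PP_cc (p+1)) (PP_cc (q+1))) (ih (p+1) (q+1) (by omega)))

lemma JS_TP2' {a b : ℕ} (hab : a ≤ b) {i j : ℕ} (hij : i ≤ j) :
    PP (JS a i * JS b j - JS a j * JS b i) := by
  obtain ⟨d, rfl⟩ := Nat.exists_eq_add_of_le hab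
  exact JS_TP2 d a i j hij

/-- `J_n(z,y) = ∑_{k=0}^n JS(n,k;z) y^k`, a polynomial in `y` with coefficients in `ℤ[z]`. -/
noncomputable def J (n : ℕ) : Polynomial (Polynomial ℤ) :=
  ∑ k ∈ Finset.range (n + 1), C (JS n k) * X ^ k

/-- The "diagonal operator" part of the JS recurrence at the polynomial level. -/
noncomputable def TJ (n : ℕ) : Polynomial (Polynomial ℤ) :=
  ∑ k ∈ Finset.range (n + 1), C (cc k * JS n k) * X ^ k

lemma coeff_J (n k : ℕ) : (J n).coeff k = JS n k := by
  unfold J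
  rw [finset_sum_coeff]
  simp only [coeff_C_mul, coeff_X_pow, mul_ite, mul_one, mul_zero]
  rw [Finset.sum_ite_eq (Finset.range (n+1)) k (fun t => JS n t)]
  split_ifs with h
  · rfl
  · exact (JS_eq_zero n k (by simpa using h)).symm

lemma coeff_TJ (n k : ℕ) : (TJ n).coeff k = cc k * JS n k := by
  unfold TJ
  rw [finset_sum_coeff]
  simp only [coeff_C_mul, coeff_X_pow, mul_ite, mul_one, mul_zero]
  rw [Finset.sum_ite_eq (Finset.range (n+1)) k (fun t => cc t * JS n t)]
  split_ifs with h
  · rfl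
  · rw [JS_eq_zero n k (by simpa using h), mul_zero]

lemma cc_zero : cc 0 = 0 := by simp [cc]

lemma J_succ (n : ℕ) : J (n+1) = X * J n + TJ n := by
  ext k
  rw [coeff_add, coeff_J, coeff_TJ]
  cases k with
  | zero =>
    rw [JS_succ_zero, mul_coeff_zero, coeff_X_zero, zero_mul, cc_zero, zero_mul, add_zero]
  | succ k =>
    rw [JS_succ_succ, coeff_X_mul, coeff_J]

lemma key_coeff (a b : ℕ) (i : ℕ) :
    (J a * TJ b - TJ a * J b).coeff i
      = ∑ u ∈ Finset.range (i+1), (cc (i-u) - cc u) * (JS a u * JS b (i-u)) := by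
  rw [coeff_sub, coeff_mul, coeff_mul, Finset.Nat.sum_antidiagonal_eq_sum_range_succ_mk,
    Finset.Nat.sum_antidiagonal_eq_sum_range_succ_mk, ← Finset.sum_sub_distrib]
  refine Finset.sum_congr rfl fun u _ => ?_
  rw [coeff_J, coeff_J, coeff_TJ, coeff_TJ]
  ring

/-- The sequence `{J_n(z,y)}_{n≥0}` is strongly `{z,y}`-log-convex: for `1 ≤ m ≤ n`,
the bivariate polynomial `J_{m-1}·J_{n+1} − J_m·J_n` has nonnegative coefficients. -/
theorem J_strongly_log_convex (m n : ℕ) (hm : 1 ≤ m) (hmn : m ≤ n) (i j : ℕ) :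
    0 ≤ ((J (m - 1) * J (n + 1) - J m * J n).coeff i).coeff j := by
  obtain ⟨a, rfl⟩ : ∃ a, m = a + 1 := ⟨m - 1, by omega⟩
  have hab : a ≤ n := by omega
  simp only [Nat.add_sub_cancel]
  have key : J a * J (n + 1) - J (a + 1) * J n = J a * TJ n - TJ a * J n := by
    rw [J_succ, J_succ]; ring
  rw [key, key_coeff]
  set S := ∑ u ∈ Finset.range (i+1), (cc (i-u) - cc u) * (JS a u * JS n (i-u)) with hS
  have hrefl : S = ∑ u ∈ Finset.range (i+1), (cc u - cc (i-u)) * (JS a (i-u) * JS n u) := by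
    rw [hS, ← Finset.sum_range_reflect]
    refine Finset.sum_congr rfl fun u hu => ?_
    have hu' : u ≤ i := by simpa [Nat.lt_succ_iff] using hu
    have h1 : i + 1 - 1 - u = i - u := by omega
    have h2 : i - (i - u) = u := by omega
    rw [h1, h2]
  have hterm : ∀ u ∈ Finset.range (i+1),
      PP ((cc (i-u) - cc u) * (JS a u * JS n (i-u))
        + (cc u - cc (i-u)) * (JS a (i-u) * JS n u)) := by
    intro u _
    rcases le_total u (i-u) with h | h
    · have e : (cc (i-u) - cc u) * (JS a u * JS n (i-u))
          + (cc u - cc (i-u)) * (JS a (i-u) * JS n u)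
          = (cc (i-u) - cc u) * (JS a u * JS n (i-u) - JS a (i-u) * JS n u) := by ring
      rw [e]
      exact PP_mul (PP_cc_sub h) (JS_TP2' hab h)
    · have e : (cc (i-u) - cc u) * (JS a u * JS n (i-u))
          + (cc u - cc (i-u)) * (JS a (i-u) * JS n u)
          = (cc u - cc (i-u)) * (JS a (i-u) * JS n u - JS a u * JS n (i-u)) := by ring
      rw [e]
      exact PP_mul (PP_cc_sub h) (JS_TP2' hab h)
  have hdouble : 0 ≤ (S + S).coeff j := by
    nth_rewrite 2 [hrefl]
    rw [hS, ← Finset.sum_add_distrib, finset_sum_coeff]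
    exact Finset.sum_nonneg fun u hu => hterm u hu j
  rw [coeff_add] at hdouble
  linarith
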